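/- arXiv:2504.04049 — 4 statements merged into one kernel-verified Lean document; each statement's English description precedes it below -/
import Mathlib

section
/- Let D = (d_{n,k}) = (g; f_1,…,f_ℓ) be a multiple Riordan array, h an ℓ-th root of f_1⋯f_ℓ, and let h̄ ∈ K[[t]] with h̄(0) = 0 be the compositional inverse of h (h(h̄) = t and h̄(h) = t). Suppose u_i ∈ K[[t]] satisfy u_i·f_i(h̄) = t·h̄ for i = 1,…,ℓ. Then g(h̄) has nonzero constant term, g(h̄)^{−1} = Σ c_k t^{ℓk} with c_0 ≠ 0, each u_i = Σ u_{i,k} t^{ℓk+1} with u_{i,0} ≠ 0, and the multiple Riordan array E = (e_{n,k}) = ( g(h̄)^{−1}; u_1,…,u_ℓ ) is a two-sided matrix inverse of D: Σ_{j=0}^{n} d_{n,j} e_{j,k} = δ_{n,k} and Σ_{j=0}^{n} e_{n,j} d_{j,k} = δ_{n,k} for all n, k ≥ 0. -/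
open PowerSeries Finset

/-- Formal substitution `F(u)`: for `u` with zero constant term, the `n`-th coefficient of
`F(u)` is `∑_{k ≤ n} F_k · [t^n] u^k`. -/
noncomputable def psComp {K : Type*} [CommRing K] (F u : K⟦X⟧) : K⟦X⟧ :=
  PowerSeries.mk fun n => ∑ k ∈ Finset.range (n + 1), coeff k F * coeff n (u ^ k)

/-- Entry `d_{n,k}` of the multiple Riordan array `(g; f_0, …, f_{ℓ-1})`: the `k`-th column,
`k = qℓ + m`, has generating function `g · f_0⋯f_{m-1} · (f_0⋯f_{ℓ-1})^q`. -/
noncomputable def mrEntry {K : Type*} [CommRing K] (ℓ : ℕ) (g : K⟦X⟧) (f : ℕ → K⟦X⟧)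
    (n k : ℕ) : K :=
  coeff n (g * (∏ i ∈ Finset.range (k % ℓ), f i) * (∏ i ∈ Finset.range ℓ, f i) ^ (k / ℓ))

section PC
variable {K : Type*} [Field K]

lemma coeff_psComp (F u : K⟦X⟧) (n : ℕ) :
    coeff n (psComp F u) = ∑ k ∈ range (n + 1), coeff k F * coeff n (u ^ k) := by
  simp [psComp]

lemma coeff_pow_eq_zero {u : K⟦X⟧} (hu0 : constantCoeff u = 0) {n k : ℕ} (h : n < k) :
    coeff n (u ^ k) = 0 := by
  obtain ⟨w, hw⟩ := X_dvd_iff.mpr hu0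
  rw [hw, mul_pow, coeff_X_pow_mul', if_neg (not_le.2 h)]

lemma coeff_psComp_ext {u : K⟦X⟧} (hu0 : constantCoeff u = 0) (F : K⟦X⟧) {n B : ℕ}
    (hB : n < B) :
    coeff n (psComp F u) = ∑ k ∈ range B, coeff k F * coeff n (u ^ k) := by
  rw [coeff_psComp]
  refine Finset.sum_subset (Finset.range_subset_range.2 hB) ?_
  intro k hk hk'
  rw [mem_range] at hk hk'
  rw [coeff_pow_eq_zero hu0 (by omega), mul_zero]

lemma coeff_mul_congr {A A' B B' : K⟦X⟧} (n : ℕ) (hA : ∀ i ≤ n, coeff i A = coeff i A')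
    (hB : ∀ i ≤ n, coeff i B = coeff i B') :
    coeff n (A * B) = coeff n (A' * B') := by
  rw [coeff_mul, coeff_mul]
  refine Finset.sum_congr rfl fun p hp => ?_
  rw [Finset.HasAntidiagonal.mem_antidiagonal] at hp
  rw [hA p.1 (by omega), hB p.2 (by omega)]

lemma coeff_psComp_eval₂ {u : K⟦X⟧} (hu0 : constantCoeff u = 0) (F : K⟦X⟧) {n M : ℕ}
    (hn : n < M) :
    coeff n (psComp F u) = coeff n ((trunc M F).eval₂ C u) := by
  rw [coeff_psComp_ext hu0 F hn, eval₂_trunc_eq_sum_range, map_sum]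
  exact Finset.sum_congr rfl fun k _ => (coeff_C_mul _ _ _).symm

lemma coeff_eval₂_eq_zero {u : K⟦X⟧} (hu0 : constantCoeff u = 0) {p : Polynomial K} (n : ℕ)
    (hp : ∀ i ≤ n, p.coeff i = 0) : coeff n (p.eval₂ C u) = 0 := by
  rw [Polynomial.eval₂_eq_sum, Polynomial.sum_def, map_sum]
  refine Finset.sum_eq_zero fun e he => ?_
  rw [coeff_C_mul]
  by_cases h : e ≤ n
  · rw [hp e h, zero_mul]
  · rw [coeff_pow_eq_zero hu0 (by omega), mul_zero]

lemma coeff_eval₂_congr {u : K⟦X⟧} (hu0 : constantCoeff u = 0) {p q : Polynomial K} (n : ℕ)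
    (hpq : ∀ i ≤ n, p.coeff i = q.coeff i) :
    coeff n (p.eval₂ C u) = coeff n (q.eval₂ C u) := by
  have h0 : coeff n ((p - q).eval₂ C u) = 0 :=
    coeff_eval₂_eq_zero hu0 n fun i hi => by rw [Polynomial.coeff_sub, hpq i hi, sub_self]
  rw [Polynomial.eval₂_sub, map_sub, sub_eq_zero] at h0
  exact h0

lemma psComp_mul {u : K⟦X⟧} (hu0 : constantCoeff u = 0) (F G : K⟦X⟧) :
    psComp (F * G) u = psComp F u * psComp G u := by
  ext n
  rw [coeff_psComp_eval₂ hu0 (F * G) (Nat.lt_succ_self n),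
    coeff_mul_congr n (fun i hi => coeff_psComp_eval₂ hu0 F (show i < n + 1 by omega))
      (fun i hi => coeff_psComp_eval₂ hu0 G (show i < n + 1 by omega)),
    ← Polynomial.eval₂_mul]
  refine coeff_eval₂_congr hu0 n fun i hi => ?_
  rw [PowerSeries.coeff_trunc, if_pos (show i < n + 1 by omega), Polynomial.coeff_mul,
    PowerSeries.coeff_mul]
  refine Finset.sum_congr rfl fun p hp => ?_
  rw [Finset.HasAntidiagonal.mem_antidiagonal] at hp
  rw [PowerSeries.coeff_trunc, if_pos (show p.1 < n + 1 by omega),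
    PowerSeries.coeff_trunc, if_pos (show p.2 < n + 1 by omega)]

lemma psComp_one (u : K⟦X⟧) : psComp (1 : K⟦X⟧) u = 1 := by
  ext n
  rw [coeff_psComp]
  rw [Finset.sum_eq_single 0]
  · simp
  · intro k hk hk0
    rw [coeff_one, if_neg hk0, zero_mul]
  · simp

lemma psComp_pow {u : K⟦X⟧} (hu0 : constantCoeff u = 0) (F : K⟦X⟧) (q : ℕ) :
    psComp (F ^ q) u = (psComp F u) ^ q := by
  induction q with
  | zero => simpa using psComp_one u
  | succ q ih => rw [pow_succ, psComp_mul hu0, ih, pow_succ]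

lemma psComp_prod {u : K⟦X⟧} (hu0 : constantCoeff u = 0) {ι : Type*} (s : Finset ι)
    (f : ι → K⟦X⟧) : psComp (∏ i ∈ s, f i) u = ∏ i ∈ s, psComp (f i) u := by
  classical
  induction s using Finset.induction with
  | empty => simpa using psComp_one u
  | insert x s hx ih =>
      rw [Finset.prod_insert hx, Finset.prod_insert hx, psComp_mul hu0, ih]

lemma psComp_X_right (F : K⟦X⟧) : psComp F X = F := by
  ext n
  rw [coeff_psComp]
  rw [Finset.sum_eq_single n]
  · rw [coeff_X_pow, if_pos rfl, mul_one]
  · intro k hk hkn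
    rw [coeff_X_pow, if_neg (Ne.symm hkn), mul_zero]
  · simp

lemma psComp_X_left {u : K⟦X⟧} (hu0 : constantCoeff u = 0) : psComp X u = u := by
  ext n
  rw [coeff_psComp]
  rw [Finset.sum_eq_single 1]
  · cases n with
    | zero => simpa using hu0.symm
    | succ n => simp
  · intro k hk hk1
    rw [coeff_X, if_neg hk1, zero_mul]
  · intro hn
    rw [mem_range, not_lt] at hn
    have hn0 : n = 0 := by omega
    subst hn0
    rw [coeff_X, if_pos rfl, one_mul, pow_one, coeff_zero_eq_constantCoeff, hu0]

lemma constantCoeff_psComp (F u : K⟦X⟧) :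
    constantCoeff (psComp F u) = constantCoeff F := by
  have := coeff_psComp F u 0
  simpa using this

lemma psComp_comp {a b : K⟦X⟧} (ha : constantCoeff a = 0) (hb : constantCoeff b = 0)
    (F : K⟦X⟧) : psComp (psComp F a) b = psComp F (psComp a b) := by
  ext n
  rw [coeff_psComp, coeff_psComp]
  calc ∑ k ∈ range (n + 1), coeff k (psComp F a) * coeff n (b ^ k)
      = ∑ k ∈ range (n + 1), ∑ j ∈ range (n + 1),
          coeff j F * coeff k (a ^ j) * coeff n (b ^ k) := by
        refine Finset.sum_congr rfl fun k hk => ?_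
        rw [mem_range] at hk
        rw [coeff_psComp_ext ha F (show k < n + 1 by omega), Finset.sum_mul]
    _ = ∑ j ∈ range (n + 1), coeff j F *
          ∑ k ∈ range (n + 1), coeff k (a ^ j) * coeff n (b ^ k) := by
        rw [Finset.sum_comm]
        refine Finset.sum_congr rfl fun j hj => ?_
        rw [Finset.mul_sum]
        refine Finset.sum_congr rfl fun k hk => ?_
        ring
    _ = ∑ j ∈ range (n + 1), coeff j F * coeff n ((psComp a b) ^ j) := by
        refine Finset.sum_congr rfl fun j hj => ?_
        rw [← psComp_pow hb a j, coeff_psComp_ext hb (a ^ j) (Nat.lt_succ_self n)]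

lemma mulSupport {ℓ a b : ℕ} {F G : K⟦X⟧} (hF : ∀ n, n % ℓ ≠ a % ℓ → coeff n F = 0)
    (hG : ∀ n, n % ℓ ≠ b % ℓ → coeff n G = 0) :
    ∀ n, n % ℓ ≠ (a + b) % ℓ → coeff n (F * G) = 0 := by
  intro n hn
  rw [coeff_mul]
  refine Finset.sum_eq_zero fun p hp => ?_
  rw [Finset.HasAntidiagonal.mem_antidiagonal] at hp
  by_cases h1 : p.1 % ℓ = a % ℓ
  · by_cases h2 : p.2 % ℓ = b % ℓ
    · exfalso
      apply hn
      rw [← hp, Nat.add_mod, h1, h2, ← Nat.add_mod]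
    · rw [hG _ h2, mul_zero]
  · rw [hF _ h1, zero_mul]

lemma powSupport {ℓ b : ℕ} {F : K⟦X⟧} (hF : ∀ n, n % ℓ ≠ b % ℓ → coeff n F = 0) (k : ℕ) :
    ∀ n, n % ℓ ≠ (k * b) % ℓ → coeff n (F ^ k) = 0 := by
  induction k with
  | zero =>
      intro n hn
      rw [pow_zero, coeff_one, if_neg]
      rintro rfl
      simp at hn
  | succ k ih =>
      intro n hn
      rw [pow_succ]
      exact mulSupport ih hF n (by rwa [show k * b + b = (k+1) * b by ring])

lemma prodSupport {ℓ : ℕ} {F : ℕ → K⟦X⟧} {M : ℕ}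
    (hs : ∀ i < M, ∀ n, n % ℓ ≠ 1 % ℓ → coeff n (F i) = 0) :
    ∀ n, n % ℓ ≠ M % ℓ → coeff n (∏ i ∈ range M, F i) = 0 := by
  induction M with
  | zero =>
      intro n hn
      rw [Finset.range_zero, Finset.prod_empty, coeff_one, if_neg]
      rintro rfl
      simp at hn
  | succ M ih =>
      intro n hn
      rw [Finset.prod_range_succ]
      exact mulSupport (ih fun i hi => hs i (by omega)) (hs M (by omega)) n hn

lemma psCompSupport {ℓ a : ℕ} {F u : K⟦X⟧} (hF : ∀ k, k % ℓ ≠ a % ℓ → coeff k F = 0)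
    (hu : ∀ n, n % ℓ ≠ 1 % ℓ → coeff n u = 0) :
    ∀ n, n % ℓ ≠ a % ℓ → coeff n (psComp F u) = 0 := by
  intro n hn
  rw [coeff_psComp]
  refine Finset.sum_eq_zero fun k hk => ?_
  by_cases hka : k % ℓ = a % ℓ
  · rw [powSupport hu k n (by rwa [mul_one, hka]), mul_zero]
  · rw [hF k hka, zero_mul]

lemma invSupport {ℓ : ℕ} {F : K⟦X⟧} (hF0 : constantCoeff F ≠ 0)
    (hF : ∀ n, n % ℓ ≠ 0 → coeff n F = 0) :
    ∀ n, n % ℓ ≠ 0 → coeff n F⁻¹ = 0 := by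
  intro n
  induction n using Nat.strong_induction_on with
  | _ n ih =>
  intro hn
  have hn0 : n ≠ 0 := by rintro rfl; simp at hn
  have h1 := congrArg (coeff n) (PowerSeries.mul_inv_cancel F hF0)
  rw [coeff_mul, coeff_one, if_neg hn0, Finset.sum_eq_single (0, n)] at h1
  · simpa [coeff_zero_eq_constantCoeff, hF0] using h1
  · intro p hp hpne
    rw [Finset.HasAntidiagonal.mem_antidiagonal] at hp
    by_cases hp1 : p.1 % ℓ = 0
    · by_cases hp2 : p.2 % ℓ = 0
      · exfalso; apply hn; rw [← hp, Nat.add_mod, hp1, hp2]; simp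
      · have hlt : p.2 < n := by
          have hne : p.2 ≠ n := fun hh => hpne (Prod.ext_iff.mpr ⟨by omega, hh⟩)
          omega
        rw [ih p.2 hlt hp2, mul_zero]
    · rw [hF p.1 hp1, zero_mul]
  · intro hmem
    rw [Finset.HasAntidiagonal.mem_antidiagonal] at hmem
    omega

lemma coeff_self_pow {u : K⟦X⟧} (hu0 : constantCoeff u = 0) (n : ℕ) :
    coeff n (u ^ n) = (coeff 1 u) ^ n := by
  induction n with
  | zero => simp
  | succ n ih =>
      rw [pow_succ, coeff_mul, Finset.sum_eq_single (n, 1)]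
      · rw [ih, pow_succ]
      · intro p hp hpne
        rw [Finset.HasAntidiagonal.mem_antidiagonal] at hp
        by_cases h1 : p.1 < n
        · rw [coeff_pow_eq_zero hu0 h1, zero_mul]
        · have : p.1 = n ∨ p.1 = n + 1 := by omega
          rcases this with h | h
          · exact absurd (Prod.ext_iff.mpr ⟨h, by omega⟩) hpne
          · have h2 : p.2 = 0 := by omega
            rw [h2, coeff_zero_eq_constantCoeff, hu0, mul_zero]
      · intro hmem
        rw [Finset.HasAntidiagonal.mem_antidiagonal] at hmem
        omega

/-- Compositional inverse of a series supported on `≡ 1 mod ℓ` is supported likewise. -/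
lemma compInvSupport {ℓ : ℕ} (hℓ : 2 ≤ ℓ) {h hbar : K⟦X⟧}
    (hhs : ∀ n, n % ℓ ≠ 1 → coeff n h = 0) (hh1 : coeff 1 h ≠ 0)
    (hbar0 : constantCoeff hbar = 0) (hinv2 : psComp hbar h = X) :
    ∀ n, n % ℓ ≠ 1 → coeff n hbar = 0 := by
  have hℓ1 : 1 % ℓ = 1 := Nat.mod_eq_of_lt (by omega)
  have hh0 : constantCoeff h = 0 := by
    have := hhs 0 (by simp)
    simpa using this
  intro n
  induction n using Nat.strong_induction_on with
  | _ n ih =>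
  intro hn
  have hn1 : n ≠ 1 := by rintro rfl; rw [hℓ1] at hn; exact hn rfl
  have h1 := congrArg (coeff n) hinv2
  rw [coeff_X, if_neg hn1, coeff_psComp, Finset.sum_range_succ] at h1
  rw [Finset.sum_eq_zero, zero_add] at h1
  · rw [coeff_self_pow hh0] at h1
    have := pow_ne_zero n hh1
    rcases mul_eq_zero.mp h1 with h | h
    · exact h
    · exact absurd h this
  · intro k hk
    rw [mem_range] at hk
    by_cases hk1 : k % ℓ = 1
    · rw [powSupport (fun m hm => hhs m (by rwa [hℓ1] at hm)) k n
        (by rw [mul_one, hk1]; exact hn), mul_zero]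
    · rw [ih k hk hk1, zero_mul]

lemma cancelOne {H : K⟦X⟧} (hH0 : constantCoeff H = 0) (hH1 : coeff 1 H ≠ 0) {F : K⟦X⟧}
    {M : ℕ} (hz : ∀ N ≤ M, coeff N (H * F) = 0) : ∀ N < M, coeff N F = 0 := by
  intro N
  induction N using Nat.strong_induction_on with
  | _ N ih =>
  intro hNM
  have h1 := hz (N + 1) (by omega)
  rw [coeff_mul, Finset.sum_eq_single (1, N)] at h1
  · exact (mul_eq_zero.mp h1).resolve_left hH1
  · intro p hp hpne
    rw [Finset.HasAntidiagonal.mem_antidiagonal] at hp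
    by_cases h0 : p.1 = 0
    · rw [h0, coeff_zero_eq_constantCoeff, hH0, zero_mul]
    · by_cases hone : p.1 = 1
      · exact absurd (Prod.ext_iff.mpr ⟨hone, by omega⟩) hpne
      · have hlt : p.2 < N := by omega
        rw [ih p.2 hlt (by omega), mul_zero]
  · intro hmem
    rw [Finset.HasAntidiagonal.mem_antidiagonal] at hmem
    omega

lemma cancelPow {H : K⟦X⟧} (hH0 : constantCoeff H = 0) (hH1 : coeff 1 H ≠ 0) {m : ℕ} :
    ∀ {F : K⟦X⟧} {M : ℕ}, (∀ N ≤ M, coeff N (H ^ m * F) = 0) →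
      ∀ N, N + m ≤ M → coeff N F = 0 := by
  induction m with
  | zero =>
      intro F M hz N hN
      have := hz N (by omega)
      rwa [pow_zero, one_mul] at this
  | succ m ih =>
      intro F M hz N hN
      have hz' : ∀ N ≤ M, coeff N (H ^ m * (H * F)) = 0 := by
        intro N hN'
        have := hz N hN'
        rwa [show H ^ (m + 1) * F = H ^ m * (H * F) by ring] at this
      have hHF : ∀ N ≤ M - m, coeff N (H * F) = 0 := fun N hN' => ih hz' N (by omega)
      exact cancelOne hH0 hH1 hHF N (by omega)

lemma coeff_zero_of_X_pow_dvd {W : K⟦X⟧} {j N : ℕ} (h : (X : K⟦X⟧) ^ j ∣ W) (hN : N < j) :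
    coeff N W = 0 := by
  obtain ⟨w, rfl⟩ := h
  rw [coeff_X_pow_mul', if_neg (not_le.2 hN)]

/-- The key algebraic identity for the column generating functions. -/
lemma key_lemma {ℓ k : ℕ} (hℓ : 0 < ℓ) {W Wi H : K⟦X⟧} (hW : W * Wi = 1) {a b : ℕ → K⟦X⟧}
    (hab : ∀ i < ℓ, a i * b i = X * H)
    (hprod : ∏ i ∈ range ℓ, b i = X ^ ℓ) :
    (W * ∏ i ∈ range (k % ℓ), a i) *
      (Wi * (∏ i ∈ range (k % ℓ), b i) * (∏ i ∈ range ℓ, b i) ^ (k / ℓ)) =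
    X ^ k * H ^ (k % ℓ) := by
  have h2 : (∏ i ∈ range (k % ℓ), a i) * ∏ i ∈ range (k % ℓ), b i = (X * H) ^ (k % ℓ) := by
    rw [← Finset.prod_mul_distrib,
      Finset.prod_congr rfl fun i hi => hab i (lt_of_lt_of_le (mem_range.1 hi)
        (Nat.mod_lt k hℓ).le)]
    rw [Finset.prod_const, Finset.card_range]
  calc (W * ∏ i ∈ range (k % ℓ), a i) *
      (Wi * (∏ i ∈ range (k % ℓ), b i) * (∏ i ∈ range ℓ, b i) ^ (k / ℓ))
      = (W * Wi) * ((∏ i ∈ range (k % ℓ), a i) * ∏ i ∈ range (k % ℓ), b i) *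
          (∏ i ∈ range ℓ, b i) ^ (k / ℓ) := by ring
    _ = (X * H) ^ (k % ℓ) * (X ^ ℓ) ^ (k / ℓ) := by rw [hW, h2, hprod, one_mul]
    _ = X ^ k * H ^ (k % ℓ) := by
        have hk : (X : K⟦X⟧) ^ k = X ^ (k % ℓ) * X ^ (ℓ * (k / ℓ)) := by
          rw [← pow_add, Nat.mod_add_div]
        rw [mul_pow, ← pow_mul, hk]
        ring

/-- Master lemma: matrix product of two "column-wise" arrays is the identity. -/
lemma mr_mul {ℓ k : ℕ} (hℓ : 2 ≤ ℓ) {H : K⟦X⟧} (hH0 : constantCoeff H = 0)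
    (hH1 : coeff 1 H ≠ 0) (colD colE : ℕ → K⟦X⟧)
    (horder : ∀ j, (X : K⟦X⟧) ^ j ∣ colD j)
    (hsupp : ∀ j, j % ℓ ≠ k % ℓ → coeff j (colE k) = 0)
    (hcol : ∀ j, j % ℓ = k % ℓ → H ^ (k % ℓ) * colD j = colD (k % ℓ) * H ^ j)
    (hkey : colD (k % ℓ) * psComp (colE k) H = X ^ k * H ^ (k % ℓ)) :
    ∀ n, ∑ j ∈ range (n + 1), coeff n (colD j) * coeff j (colE k) =
      if n = k then 1 else 0 := by
  intro n
  set m := k % ℓ with hm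
  set S : K⟦X⟧ := ∑ j ∈ range (n + 1 + m), coeff j (colE k) • colD j with hS
  have hT : (∑ j ∈ range (n + 1), coeff n (colD j) * coeff j (colE k)) = coeff n S := by
    rw [hS, map_sum]
    rw [← Finset.sum_subset (Finset.range_subset_range.2 (show n + 1 ≤ n + 1 + m by omega))]
    · refine Finset.sum_congr rfl fun j hj => ?_
      rw [map_smul, smul_eq_mul, mul_comm]
    · intro j hj hj'
      rw [mem_range] at hj hj'
      rw [map_smul, smul_eq_mul, coeff_zero_of_X_pow_dvd (horder j) (by omega), mul_zero]
  set P : K⟦X⟧ := ∑ j ∈ range (n + 1 + m), coeff j (colE k) • H ^ j with hP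
  have hHmS : H ^ m * S = colD m * P := by
    rw [hS, hP, Finset.mul_sum, Finset.mul_sum]
    refine Finset.sum_congr rfl fun j hj => ?_
    rw [mul_smul_comm, mul_smul_comm]
    by_cases hjm : j % ℓ = m
    · rw [hcol j hjm]
    · rw [hsupp j hjm, zero_smul, zero_smul]
  have hPc : ∀ N ≤ n + m, coeff N P = coeff N (psComp (colE k) H) := by
    intro N hN
    rw [hP, map_sum, coeff_psComp]
    rw [← Finset.sum_subset (Finset.range_subset_range.2 (show N + 1 ≤ n + 1 + m by omega))]
    · refine Finset.sum_congr rfl fun j hj => by rw [map_smul, smul_eq_mul]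
    · intro j hj hj'
      rw [mem_range] at hj hj'
      rw [map_smul, smul_eq_mul, coeff_pow_eq_zero hH0 (by omega), mul_zero]
  have hz : ∀ N ≤ n + m, coeff N (H ^ m * (S - X ^ k)) = 0 := by
    intro N hN
    rw [mul_sub, map_sub, hHmS,
      coeff_mul_congr N (fun i _ => rfl) (fun i hi => hPc i (by omega)), hkey,
      show (X : K⟦X⟧) ^ k * H ^ m = H ^ m * X ^ k by ring, sub_self]
  have hfin := cancelPow hH0 hH1 hz n (by omega)
  rw [map_sub, sub_eq_zero] at hfin
  rw [hT, hfin, coeff_X_pow]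

end PC

/-- The inverse of a multiple Riordan array. -/
theorem stmt2 {K : Type*} [Field K] [CharZero K] (ℓ : ℕ) (hℓ : 2 ≤ ℓ)
    (g : K⟦X⟧) (f : ℕ → K⟦X⟧)
    (hg : ∀ n, ¬ (ℓ ∣ n) → coeff n g = 0) (hg0 : constantCoeff g ≠ 0)
    (hf : ∀ i < ℓ, ∀ n, n % ℓ ≠ 1 → coeff n (f i) = 0)
    (hf1 : ∀ i < ℓ, coeff 1 (f i) ≠ 0)
    (h : K⟦X⟧) (hhs : ∀ n, n % ℓ ≠ 1 → coeff n h = 0) (hh1 : coeff 1 h ≠ 0)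
    (hhl : h ^ ℓ = ∏ i ∈ Finset.range ℓ, f i)
    (hbar : K⟦X⟧) (hbar0 : constantCoeff hbar = 0)
    (hinv1 : psComp h hbar = X) (hinv2 : psComp hbar h = X)
    (u : ℕ → K⟦X⟧) (hu : ∀ i < ℓ, u i * psComp (f i) hbar = X * hbar)
    (d e : ℕ → ℕ → K)
    (hd : ∀ n k, d n k = mrEntry ℓ g f n k)
    (he : ∀ n k, e n k = mrEntry ℓ (psComp g hbar)⁻¹ u n k) :
    constantCoeff (psComp g hbar) ≠ 0 ∧
    (∀ n, ¬ (ℓ ∣ n) → coeff n (psComp g hbar)⁻¹ = 0) ∧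
    constantCoeff (psComp g hbar)⁻¹ ≠ 0 ∧
    (∀ i < ℓ, ∀ n, n % ℓ ≠ 1 → coeff n (u i) = 0) ∧
    (∀ i < ℓ, coeff 1 (u i) ≠ 0) ∧
    (∀ n k, ∑ j ∈ Finset.range (n + 1), d n j * e j k = if n = k then 1 else 0) ∧
    (∀ n k, ∑ j ∈ Finset.range (n + 1), e n j * d j k = if n = k then 1 else 0) := by
  have hℓ0 : 0 < ℓ := by omega
  have hℓ1 : 1 % ℓ = 1 := Nat.mod_eq_of_lt (by omega)
  have hmod : ∀ n : ℕ, ℓ ∣ n ↔ n % ℓ = 0 := fun n => Nat.dvd_iff_mod_eq_zero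
  have hh0 : constantCoeff h = 0 := by simpa using hhs 0 (by simp)
  have hf0 : ∀ i < ℓ, constantCoeff (f i) = 0 := fun i hi => by
    simpa using hf i hi 0 (by simp)
  have hbar1 : coeff 1 hbar * coeff 1 h = 1 := by
    have h1 := congrArg (coeff 1) hinv2
    rw [coeff_psComp] at h1
    simpa [Finset.sum_range_succ] using h1
  have hbar1' : coeff 1 hbar ≠ 0 := fun h0 => by simp [h0] at hbar1
  have hbar_ne : hbar ≠ 0 := fun h0 => hbar1' (by rw [h0]; simp)
  have hh_ne : h ≠ 0 := fun h0 => hh1 (by rw [h0]; simp)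
  have hbarsup : ∀ n, n % ℓ ≠ 1 → coeff n hbar = 0 :=
    compInvSupport hℓ hhs hh1 hbar0 hinv2
  have hbarsup' : ∀ n, n % ℓ ≠ 1 % ℓ → coeff n hbar = 0 := fun n hn =>
    hbarsup n (by rwa [hℓ1] at hn)
  have hgsup : ∀ n, n % ℓ ≠ 0 % ℓ → coeff n g = 0 := fun n hn =>
    hg n (fun hdvd => hn (by rw [Nat.zero_mod]; exact (hmod n).mp hdvd))
  -- first conclusion
  have goal1 : constantCoeff (psComp g hbar) ≠ 0 := by
    rw [constantCoeff_psComp]; exact hg0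
  have hG'sup : ∀ n, n % ℓ ≠ 0 % ℓ → coeff n (psComp g hbar) = 0 :=
    psCompSupport hgsup hbarsup'
  have hGinv_sup0 : ∀ n, n % ℓ ≠ 0 → coeff n (psComp g hbar)⁻¹ = 0 :=
    invSupport goal1 (fun n hn => hG'sup n (by simpa using hn))
  have goal2 : ∀ n, ¬ (ℓ ∣ n) → coeff n (psComp g hbar)⁻¹ = 0 := fun n hn =>
    hGinv_sup0 n (fun h0 => hn ((hmod n).mpr h0))
  have goal3 : constantCoeff (psComp g hbar)⁻¹ ≠ 0 := by
    rw [PowerSeries.constantCoeff_inv]; exact inv_ne_zero goal1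
  -- facts about the u i
  have hufacts : ∀ i < ℓ, (∀ n, n % ℓ ≠ 1 % ℓ → coeff n (u i) = 0) ∧
      coeff 1 (u i) ≠ 0 ∧ constantCoeff (u i) = 0 := by
    intro i hi
    have hw0 : constantCoeff (psComp (f i) hbar) = 0 := by
      rw [constantCoeff_psComp]; exact hf0 i hi
    have hwsup : ∀ n, n % ℓ ≠ 1 % ℓ → coeff n (psComp (f i) hbar) = 0 :=
      psCompSupport (fun kk hkk => hf i hi kk (by rwa [hℓ1] at hkk)) hbarsup'
    have hw1 : coeff 1 (psComp (f i) hbar) ≠ 0 := by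
      rw [coeff_psComp]
      have h0 : coeff 0 (f i) = 0 := by
        simpa using hf0 i hi
      simpa [Finset.sum_range_succ, h0] using mul_ne_zero (hf1 i hi) hbar1'
    obtain ⟨v, hv⟩ := X_dvd_iff.mpr hw0
    have hv0 : constantCoeff v ≠ 0 := by
      have h1 : coeff 1 (psComp (f i) hbar) = coeff 0 v := by
        rw [hv]; exact coeff_succ_X_mul 0 v
      rw [← coeff_zero_eq_constantCoeff, ← h1]; exact hw1
    have hvsup : ∀ n, n % ℓ ≠ 0 → coeff n v = 0 := by
      intro n hn
      have h2 : coeff (n + 1) (psComp (f i) hbar) = coeff n v := by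
        rw [hv]; exact coeff_succ_X_mul n v
      rw [← h2]
      apply hwsup
      rw [hℓ1]
      intro hmod1
      apply hn
      have h3 := Nat.div_add_mod (n + 1) ℓ
      have h4 : n = ℓ * ((n + 1) / ℓ) := by omega
      rw [h4, Nat.mul_mod_right]
    have huv : u i * v = hbar := by
      apply mul_left_cancel₀ (X_ne_zero (R := K))
      calc X * (u i * v) = u i * (X * v) := by ring
        _ = u i * psComp (f i) hbar := by rw [← hv]
        _ = X * hbar := hu i hi
    have hueq : u i = hbar * v⁻¹ := by
      calc u i = u i * (v * v⁻¹) := by rw [PowerSeries.mul_inv_cancel v hv0, mul_one]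
        _ = (u i * v) * v⁻¹ := by ring
        _ = hbar * v⁻¹ := by rw [huv]
    have hvinv : ∀ n, n % ℓ ≠ 0 % ℓ → coeff n v⁻¹ = 0 := fun n hn =>
      invSupport hv0 hvsup n (by simpa using hn)
    refine ⟨?_, ?_, ?_⟩
    · intro n hn
      rw [hueq]
      exact mulSupport hbarsup' hvinv n (by simpa using hn)
    · rw [hueq, coeff_mul, Finset.Nat.sum_antidiagonal_eq_sum_range_succ_mk,
        Finset.sum_range_succ, Finset.sum_range_one]
      have hb0 : coeff 0 hbar = 0 := by simpa using hbar0
      simp [hb0, PowerSeries.constantCoeff_inv]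
      exact ⟨hbar1', hv0⟩
    · rw [hueq, map_mul]
      simp [hbar0]
  have goal4 : ∀ i < ℓ, ∀ n, n % ℓ ≠ 1 → coeff n (u i) = 0 := fun i hi n hn =>
    (hufacts i hi).1 n (by rwa [hℓ1])
  have goal5 : ∀ i < ℓ, coeff 1 (u i) ≠ 0 := fun i hi => (hufacts i hi).2.1
  have hu0 : ∀ i < ℓ, constantCoeff (u i) = 0 := fun i hi => (hufacts i hi).2.2
  -- substitution identities
  have hcomp1 : ∀ F : K⟦X⟧, psComp (psComp F hbar) h = F := fun F => by
    rw [psComp_comp hbar0 hh0, hinv2, psComp_X_right]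
  have hcomp2 : ∀ F : K⟦X⟧, psComp (psComp F h) hbar = F := fun F => by
    rw [psComp_comp hh0 hbar0, hinv1, psComp_X_right]
  have hGh : g * psComp (psComp g hbar)⁻¹ h = 1 := by
    have h1 := congrArg (fun F => psComp F h)
      (PowerSeries.mul_inv_cancel (psComp g hbar) goal1)
    simpa [psComp_mul hh0, psComp_one, hcomp1] using h1
  have key_ui : ∀ i < ℓ, f i * psComp (u i) h = X * h := by
    intro i hi
    have h1 := congrArg (fun F => psComp F h) (hu i hi)
    simp only [psComp_mul hh0] at h1
    rw [psComp_comp hbar0 hh0, hinv2, psComp_X_right, psComp_X_left hh0] at h1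
    rw [mul_comm] at h1
    rw [h1]
    ring
  have prod_uh : ∏ i ∈ Finset.range ℓ, psComp (u i) h = X ^ ℓ := by
    have h1 : (∏ i ∈ Finset.range ℓ, f i) * ∏ i ∈ Finset.range ℓ, psComp (u i) h
        = (X * h) ^ ℓ := by
      rw [← Finset.prod_mul_distrib,
        Finset.prod_congr rfl fun i hi => key_ui i (mem_range.1 hi),
        Finset.prod_const, Finset.card_range]
    rw [← hhl] at h1
    apply mul_left_cancel₀ (pow_ne_zero ℓ hh_ne)
    rw [h1, mul_pow]; ring
  have prod_u : (∏ i ∈ Finset.range ℓ, u i) = hbar ^ ℓ := by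
    have h1 := congrArg (fun F => psComp F hbar) prod_uh
    simpa [psComp_prod hbar0, psComp_pow hbar0, psComp_X_left hbar0, hcomp2] using h1
  have prod_fhbar : ∏ i ∈ Finset.range ℓ, psComp (f i) hbar = X ^ ℓ := by
    have h1 : (∏ i ∈ Finset.range ℓ, u i) * ∏ i ∈ Finset.range ℓ, psComp (f i) hbar
        = (X * hbar) ^ ℓ := by
      rw [← Finset.prod_mul_distrib,
        Finset.prod_congr rfl fun i hi => hu i (mem_range.1 hi),
        Finset.prod_const, Finset.card_range]
    rw [prod_u] at h1
    apply mul_left_cancel₀ (pow_ne_zero ℓ hbar_ne)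
    rw [h1, mul_pow]; ring
  -- columns
  have hdc : ∀ n k, d n k = coeff n
      (g * (∏ i ∈ Finset.range (k % ℓ), f i) * (∏ i ∈ Finset.range ℓ, f i) ^ (k / ℓ)) :=
    fun n k => hd n k
  have hec : ∀ n k, e n k = coeff n
      ((psComp g hbar)⁻¹ * (∏ i ∈ Finset.range (k % ℓ), u i) *
        (∏ i ∈ Finset.range ℓ, u i) ^ (k / ℓ)) := fun n k => he n k
  -- order facts
  have horderD : ∀ (g' : K⟦X⟧) (f' : ℕ → K⟦X⟧), (∀ i < ℓ, constantCoeff (f' i) = 0) →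
      ∀ j, (X : K⟦X⟧) ^ j ∣
        g' * (∏ i ∈ Finset.range (j % ℓ), f' i) * (∏ i ∈ Finset.range ℓ, f' i) ^ (j / ℓ) := by
    intro g' f' hf'0 j
    have hXf : ∀ i < ℓ, (X : K⟦X⟧) ∣ f' i := fun i hi => X_dvd_iff.mpr (hf'0 i hi)
    have h1 : (X : K⟦X⟧) ^ (j % ℓ) ∣ ∏ i ∈ Finset.range (j % ℓ), f' i :=
      calc (X : K⟦X⟧) ^ (j % ℓ) = ∏ _i ∈ Finset.range (j % ℓ), (X : K⟦X⟧) := by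
            rw [Finset.prod_const, Finset.card_range]
        _ ∣ ∏ i ∈ Finset.range (j % ℓ), f' i := Finset.prod_dvd_prod_of_dvd _ _ fun i hi =>
            hXf i (lt_of_lt_of_le (mem_range.1 hi) (Nat.mod_lt j hℓ0).le)
    have h2 : (X : K⟦X⟧) ^ ℓ ∣ ∏ i ∈ Finset.range ℓ, f' i :=
      calc (X : K⟦X⟧) ^ ℓ = ∏ _i ∈ Finset.range ℓ, (X : K⟦X⟧) := by
            rw [Finset.prod_const, Finset.card_range]
        _ ∣ ∏ i ∈ Finset.range ℓ, f' i := Finset.prod_dvd_prod_of_dvd _ _ fun i hi =>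
            hXf i (mem_range.1 hi)
    have h3 : (X : K⟦X⟧) ^ (ℓ * (j / ℓ)) ∣ (∏ i ∈ Finset.range ℓ, f' i) ^ (j / ℓ) := by
      rw [pow_mul]
      exact pow_dvd_pow_of_dvd h2 _
    have h4 : (X : K⟦X⟧) ^ j = X ^ (j % ℓ) * X ^ (ℓ * (j / ℓ)) := by
      rw [← pow_add, Nat.mod_add_div]
    rw [h4, mul_assoc]
    exact Dvd.dvd.mul_left (mul_dvd_mul h1 h3) g'
  -- support of columns
  have hsuppCol : ∀ (g' : K⟦X⟧) (f' : ℕ → K⟦X⟧),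
      (∀ n, n % ℓ ≠ 0 % ℓ → coeff n g' = 0) →
      (∀ i < ℓ, ∀ n, n % ℓ ≠ 1 % ℓ → coeff n (f' i) = 0) →
      ∀ k j, j % ℓ ≠ k % ℓ → coeff j
        (g' * (∏ i ∈ Finset.range (k % ℓ), f' i) *
          (∏ i ∈ Finset.range ℓ, f' i) ^ (k / ℓ)) = 0 := by
    intro g' f' hg' hf' k j hj
    have hmlt : k % ℓ < ℓ := Nat.mod_lt _ hℓ0
    have h2 := prodSupport (F := f') (M := k % ℓ) (fun i hi => hf' i (lt_trans hi hmlt))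
    have h3 := prodSupport (F := f') (M := ℓ) (fun i hi => hf' i hi)
    have h4 := powSupport h3 (k / ℓ)
    apply mulSupport (mulSupport hg' h2) h4 j
    rw [Nat.zero_add, Nat.add_mul_mod_self_right, Nat.mod_mod_of_dvd _ (dvd_refl ℓ)]
    exact hj
  -- column compatibility
  have hcolComp : ∀ (g' : K⟦X⟧) (f' : ℕ → K⟦X⟧) (H : K⟦X⟧),
      (∏ i ∈ Finset.range ℓ, f' i) = H ^ ℓ →
      ∀ k j, j % ℓ = k % ℓ →
        H ^ (k % ℓ) * (g' * (∏ i ∈ Finset.range (j % ℓ), f' i) *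
            (∏ i ∈ Finset.range ℓ, f' i) ^ (j / ℓ)) =
          (g' * (∏ i ∈ Finset.range (k % ℓ % ℓ), f' i) *
            (∏ i ∈ Finset.range ℓ, f' i) ^ (k % ℓ / ℓ)) * H ^ j := by
    intro g' f' H hprod k j hj
    have hmlt : k % ℓ < ℓ := Nat.mod_lt _ hℓ0
    rw [Nat.mod_eq_of_lt hmlt, Nat.div_eq_of_lt hmlt, pow_zero, mul_one, hj, hprod,
      ← pow_mul]
    have h5 : ℓ * (j / ℓ) + k % ℓ = j := by
      rw [← hj]; exact Nat.div_add_mod j ℓ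
    rw [show H ^ j = H ^ (ℓ * (j / ℓ)) * H ^ (k % ℓ) by rw [← pow_add, h5]]
    ring
  -- the two product identities
  have goal6 : ∀ n k, ∑ j ∈ Finset.range (n + 1), d n j * e j k = if n = k then 1 else 0 := by
    intro n k
    have hstep : ∀ j ∈ Finset.range (n + 1), d n j * e j k =
        coeff n (g * (∏ i ∈ Finset.range (j % ℓ), f i) *
          (∏ i ∈ Finset.range ℓ, f i) ^ (j / ℓ)) *
        coeff j ((psComp g hbar)⁻¹ * (∏ i ∈ Finset.range (k % ℓ), u i) *
          (∏ i ∈ Finset.range ℓ, u i) ^ (k / ℓ)) := fun j _ => by rw [hdc, hec]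
    rw [Finset.sum_congr rfl hstep]
    refine mr_mul hℓ hh0 hh1
      (fun j => g * (∏ i ∈ Finset.range (j % ℓ), f i) * (∏ i ∈ Finset.range ℓ, f i) ^ (j / ℓ))
      (fun j => (psComp g hbar)⁻¹ * (∏ i ∈ Finset.range (j % ℓ), u i) *
        (∏ i ∈ Finset.range ℓ, u i) ^ (j / ℓ))
      (horderD g f hf0) ?_ ?_ ?_ n
    · exact fun j hj => hsuppCol (psComp g hbar)⁻¹ u
        (fun m hm => hGinv_sup0 m (by simpa using hm)) (fun i hi => (hufacts i hi).1) k j hj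
    · exact fun j hj => hcolComp g f h hhl.symm k j hj
    · have hexp : psComp ((psComp g hbar)⁻¹ * (∏ i ∈ Finset.range (k % ℓ), u i) *
          (∏ i ∈ Finset.range ℓ, u i) ^ (k / ℓ)) h =
          psComp (psComp g hbar)⁻¹ h * (∏ i ∈ Finset.range (k % ℓ), psComp (u i) h) *
            (∏ i ∈ Finset.range ℓ, psComp (u i) h) ^ (k / ℓ) := by
        rw [psComp_mul hh0, psComp_mul hh0, psComp_pow hh0, psComp_prod hh0,
          psComp_prod hh0]
      have hmlt : k % ℓ < ℓ := Nat.mod_lt _ hℓ0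
      beta_reduce
      rw [hexp, Nat.mod_eq_of_lt hmlt, Nat.div_eq_of_lt hmlt, pow_zero, mul_one]
      have hkl := key_lemma (k := k) hℓ0 hGh (a := f) (b := fun i => psComp (u i) h)
        (fun i hi => key_ui i hi) prod_uh
      linear_combination hkl
  have goal7 : ∀ n k, ∑ j ∈ Finset.range (n + 1), e n j * d j k = if n = k then 1 else 0 := by
    intro n k
    have hstep : ∀ j ∈ Finset.range (n + 1), e n j * d j k =
        coeff n ((psComp g hbar)⁻¹ * (∏ i ∈ Finset.range (j % ℓ), u i) *
          (∏ i ∈ Finset.range ℓ, u i) ^ (j / ℓ)) *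
        coeff j (g * (∏ i ∈ Finset.range (k % ℓ), f i) *
          (∏ i ∈ Finset.range ℓ, f i) ^ (k / ℓ)) := fun j _ => by rw [hdc, hec]
    rw [Finset.sum_congr rfl hstep]
    refine mr_mul hℓ hbar0 hbar1'
      (fun j => (psComp g hbar)⁻¹ * (∏ i ∈ Finset.range (j % ℓ), u i) *
        (∏ i ∈ Finset.range ℓ, u i) ^ (j / ℓ))
      (fun j => g * (∏ i ∈ Finset.range (j % ℓ), f i) * (∏ i ∈ Finset.range ℓ, f i) ^ (j / ℓ))
      (horderD (psComp g hbar)⁻¹ u hu0) ?_ ?_ ?_ n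
    · exact fun j hj => hsuppCol g f hgsup
        (fun i hi m hm => hf i hi m (by rwa [hℓ1] at hm)) k j hj
    · exact fun j hj => hcolComp (psComp g hbar)⁻¹ u hbar prod_u k j hj
    · have hexp : psComp (g * (∏ i ∈ Finset.range (k % ℓ), f i) *
          (∏ i ∈ Finset.range ℓ, f i) ^ (k / ℓ)) hbar =
          psComp g hbar * (∏ i ∈ Finset.range (k % ℓ), psComp (f i) hbar) *
            (∏ i ∈ Finset.range ℓ, psComp (f i) hbar) ^ (k / ℓ) := by
        rw [psComp_mul hbar0, psComp_mul hbar0, psComp_pow hbar0, psComp_prod hbar0,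
          psComp_prod hbar0]
      have hmlt : k % ℓ < ℓ := Nat.mod_lt _ hℓ0
      beta_reduce
      rw [hexp, Nat.mod_eq_of_lt hmlt, Nat.div_eq_of_lt hmlt, pow_zero, mul_one]
      have hGg : (psComp g hbar)⁻¹ * psComp g hbar = 1 :=
        PowerSeries.inv_mul_cancel _ goal1
      have hkl := key_lemma (k := k) hℓ0 hGg (a := u) (b := fun i => psComp (f i) hbar)
        (fun i hi => hu i hi) prod_fhbar
      linear_combination hkl
  exact ⟨goal1, goal2, goal3, goal4, goal5, goal6, goal7⟩
end

section
/- Let (d_{n,k}) = (g, f) be a Riordan type array. There exists a unique Z = Σ_{j≥0} z_j t^j ∈ K[[t]] such that g·(1 − t·Z(t·f)) = g(0) (equivalently g = d_{0,0}/(1 − t·Z(tf))). For this Z-sequence (z_j), one has d_{n,0} = Σ_{j=0}^{n−1} z_j d_{n−j−1, j} for all n ≥ 1. -/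
open PowerSeries Finset

section Aux

variable {K : Type*} [Field K]

lemma coeff_pow_eq_zero_aux {u : K⟦X⟧} (hu : constantCoeff u = 0) {j k : ℕ} (h : j < k) :
    coeff j (u ^ k) = 0 :=
  PowerSeries.X_pow_dvd_iff.mp (pow_dvd_pow_of_dvd (PowerSeries.X_dvd_iff.mpr hu) k) j h

lemma coeff_mul_psComp (g Z u : K⟦X⟧) (hu : constantCoeff u = 0) (m : ℕ) :
    coeff m (g * psComp Z u)
      = ∑ k ∈ Finset.range (m + 1), coeff k Z * coeff m (g * u ^ k) := by
  rw [coeff_mul]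
  have step : ∀ p ∈ antidiagonal m,
      coeff p.1 g * coeff p.2 (psComp Z u)
        = ∑ k ∈ Finset.range (m + 1),
            coeff k Z * (coeff p.1 g * coeff p.2 (u ^ k)) := by
    intro p hp
    have hp2 : p.2 ≤ m := le_of_add_le_right (Finset.HasAntidiagonal.mem_antidiagonal.mp hp).le
    rw [psComp, coeff_mk, Finset.mul_sum]
    rw [← Finset.sum_subset (Finset.range_subset_range.mpr (by omega) :
          Finset.range (p.2 + 1) ⊆ Finset.range (m + 1))]
    · exact Finset.sum_congr rfl fun k _ => by ring
    · intro k _ hk2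
      have hlt : p.2 < k := by
        simp only [Finset.mem_range, not_lt] at hk2; omega
      rw [coeff_pow_eq_zero_aux hu hlt]; ring
  rw [Finset.sum_congr rfl step, Finset.sum_comm]
  refine Finset.sum_congr rfl fun k _ => ?_
  rw [coeff_mul, Finset.mul_sum]

lemma phi_coeff (Z f : K⟦X⟧) (n : ℕ) :
    coeff n (psComp Z (X * f))
      = ∑ k ∈ Finset.range (n + 1), coeff k Z * coeff (n - k) (f ^ k) := by
  have := coeff_mul_psComp (1 : K⟦X⟧) Z (X * f) (by simp) n
  rw [one_mul] at this
  rw [this]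
  refine Finset.sum_congr rfl fun k hk => ?_
  have hk' : k ≤ n := by simpa using Nat.lt_succ_iff.mp (Finset.mem_range.mp hk)
  rw [one_mul, mul_pow, coeff_X_pow_mul', if_pos hk']

/-- recursively defined solution of a triangular system -/
noncomputable def zfun (c : ℕ → ℕ → K) (h : ℕ → K) : ℕ → K
  | n => (h n - ∑ k ∈ (Finset.range n).attach, zfun c h k.1 * c n k.1) / c n n
  termination_by n => n
  decreasing_by exact Finset.mem_range.mp k.2

lemma zfun_spec (c : ℕ → ℕ → K) (h : ℕ → K) (hc : ∀ n, c n n ≠ 0) (n : ℕ) :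
    ∑ k ∈ Finset.range (n + 1), zfun c h k * c n k = h n := by
  rw [Finset.sum_range_succ]
  conv_lhs => rw [zfun]
  rw [Finset.sum_attach (Finset.range n) (fun k => zfun c h k * c n k),
    div_mul_cancel₀ _ (hc n)]
  ring

/-- the key reformulation of the defining equation of the `Z`-sequence -/
lemma key_iff (g f : K⟦X⟧) (hg0 : constantCoeff g ≠ 0) (Z : K⟦X⟧) :
    g * (1 - X * psComp Z (X * f)) = C (constantCoeff g) ↔
    ∀ n, ∑ k ∈ Finset.range (n + 1), coeff k Z * coeff (n - k) (f ^ k)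
        = coeff (n + 1) (1 - C (constantCoeff g) * g⁻¹) := by
  have hgne : g ≠ 0 := fun h => hg0 (by simp [h])
  have hmul : g * (C (constantCoeff g) * g⁻¹) = C (constantCoeff g) := by
    rw [mul_comm (C (constantCoeff g)) g⁻¹, ← mul_assoc,
      PowerSeries.mul_inv_cancel g hg0, one_mul]
  constructor
  · intro hZ n
    have h1 : (1 : K⟦X⟧) - X * psComp Z (X * f) = C (constantCoeff g) * g⁻¹ :=
      mul_left_cancel₀ hgne (by rw [hZ, hmul])
    have h2 : X * psComp Z (X * f) = 1 - C (constantCoeff g) * g⁻¹ := by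
      rw [← h1]; ring
    have := congrArg (coeff (n + 1)) h2
    rwa [coeff_succ_X_mul, phi_coeff] at this
  · intro hcond
    have h2 : X * psComp Z (X * f) = 1 - C (constantCoeff g) * g⁻¹ := by
      ext m
      cases m with
      | zero =>
        simp only [coeff_zero_eq_constantCoeff, map_sub, map_mul, map_one,
          constantCoeff_C, PowerSeries.constantCoeff_inv]
        rw [mul_inv_cancel₀ hg0]
        simp
      | succ n =>
        rw [coeff_succ_X_mul, phi_coeff]
        exact hcond n
    rw [h2]
    have : (1 : K⟦X⟧) - (1 - C (constantCoeff g) * g⁻¹)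
        = C (constantCoeff g) * g⁻¹ := by ring
    rw [this, hmul]

end Aux

/-- Existence and uniqueness of the `Z`-sequence of a Riordan type array `(g, f)`
(entries `d_{n,k} = [t^n] g f^k`), and the recurrence it induces. -/
theorem stmt7 {K : Type*} [Field K] [CharZero K]
    (g f : K⟦X⟧) (hg0 : constantCoeff g ≠ 0) (hf0 : constantCoeff f ≠ 0)
    (d : ℕ → ℕ → K) (hd : ∀ n k, d n k = coeff n (g * f ^ k)) :
    (∃! Z : K⟦X⟧, g * (1 - X * psComp Z (X * f)) = C (constantCoeff g)) ∧
    ∀ Z : K⟦X⟧, g * (1 - X * psComp Z (X * f)) = C (constantCoeff g) →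
      ∀ n, 1 ≤ n →
        d n 0 = ∑ j ∈ Finset.range n, coeff j Z * d (n - j - 1) j := by
  set c : ℕ → ℕ → K := fun n k => coeff (n - k) (f ^ k) with hc
  set H : ℕ → K := fun n => coeff (n + 1) (1 - C (constantCoeff g) * g⁻¹) with hH
  have hcnn : ∀ n, c n n ≠ 0 := by
    intro n
    simp only [hc, Nat.sub_self, coeff_zero_eq_constantCoeff, map_pow]
    exact pow_ne_zero n hf0
  constructor
  · refine ⟨PowerSeries.mk (zfun c H), ?_, ?_⟩
    · show g * (1 - X * psComp (PowerSeries.mk (zfun c H)) (X * f)) = C (constantCoeff g)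
      rw [key_iff g f hg0]
      intro n
      have := zfun_spec c H hcnn n
      simpa [hc, hH] using this
    · intro Z hZ
      replace hZ : g * (1 - X * psComp Z (X * f)) = C (constantCoeff g) := hZ
      rw [key_iff g f hg0] at hZ
      have hW : ∀ n, ∑ k ∈ Finset.range (n + 1), zfun c H k * c n k = H n :=
        zfun_spec c H hcnn
      ext n
      rw [coeff_mk]
      induction n using Nat.strong_induction_on with
      | _ n ih =>
        have h1 := hZ n
        have h2 := hW n
        rw [Finset.sum_range_succ] at h1 h2
        have hsum : ∑ k ∈ Finset.range n, coeff k Z * coeff (n - k) (f ^ k)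
            = ∑ k ∈ Finset.range n, zfun c H k * c n k := by
          refine Finset.sum_congr rfl fun k hk => ?_
          rw [ih k (Finset.mem_range.mp hk)]
        rw [hsum] at h1
        have : coeff n Z * c n n = zfun c H n * c n n := by
          have := h1.trans h2.symm
          simpa [hc, hH] using this
        exact mul_right_cancel₀ (hcnn n) this
  · intro Z hZ n hn
    obtain ⟨m, rfl⟩ : ∃ m, n = m + 1 := ⟨n - 1, by omega⟩
    have hco := congrArg (coeff (m + 1)) hZ
    rw [mul_sub, mul_one, map_sub, coeff_C, if_neg (Nat.succ_ne_zero m)] at hco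
    have hre : g * (X * psComp Z (X * f)) = X * (g * psComp Z (X * f)) := by ring
    rw [hre, coeff_succ_X_mul, coeff_mul_psComp g Z (X * f) (by simp) m] at hco
    have hL : d (m + 1) 0 = coeff (m + 1) g := by rw [hd]; simp
    rw [hL, sub_eq_zero.mp hco]
    refine Finset.sum_congr rfl fun j hj => ?_
    have hj' : j ≤ m := Nat.lt_succ_iff.mp (Finset.mem_range.mp hj)
    congr 1
    rw [hd, show m + 1 - j - 1 = m - j from by omega]
    have hre2 : g * (X * f) ^ j = X ^ j * (g * f ^ j) := by ring
    rw [hre2, coeff_X_pow_mul', if_pos hj']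
end

section
/- For every m, n ∈ ℕ and every element x of a commutative ring R: Σ_{k=0}^{n} C(n,k)·k^m·(−1)^{n−k}·x^{n−k} = Σ_{k=0}^{min(m,n)} S(m,k)·C(n,k)·k!·(1−x)^{n−k}. -/
/-- Stirling numbers of the second kind: `S(0,0) = 1`, `S(m,k) = 0` for `k > m`, and
`S(m+1,k) = k·S(m,k) + S(m,k−1)`. -/
def stirling2 : ℕ → ℕ → ℕ
  | 0, 0 => 1
  | 0, _ + 1 => 0
  | _ + 1, 0 => 0
  | m + 1, k + 1 => (k + 1) * stirling2 m (k + 1) + stirling2 m k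

lemma stirling2_eq_zero_of_lt : ∀ m k : ℕ, m < k → stirling2 m k = 0 := by
  intro m
  induction m with
  | zero => intro k hk; cases k with
    | zero => omega
    | succ k => rfl
  | succ m ih =>
    intro k hk
    cases k with
    | zero => omega
    | succ k =>
      show (k + 1) * stirling2 m (k + 1) + stirling2 m k = 0
      rw [ih (k+1) (by omega), ih k (by omega)]
      ring

lemma pow_eq_sum_stirling2 (m : ℕ) (k : ℕ) :
    k ^ m = ∑ j ∈ Finset.range (m + 1), stirling2 m j * k.descFactorial j := by
  induction m with
  | zero => simp [stirling2]
  | succ m ih =>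
    have key : ∀ j, k * k.descFactorial j = j * k.descFactorial j + k.descFactorial (j + 1) := by
      intro j
      rw [Nat.descFactorial_succ]
      rcases le_or_gt j k with h | h
      · have hj : j + (k - j) = k := by omega
        nth_rewrite 1 [← hj]
        ring
      · rw [Nat.descFactorial_eq_zero_iff_lt.2 h]
        ring
    calc k ^ (m + 1) = k * k ^ m := by ring
    _ = ∑ j ∈ Finset.range (m + 1), stirling2 m j * (k * k.descFactorial j) := by
        rw [ih, Finset.mul_sum]; exact Finset.sum_congr rfl fun j _ => by ring
    _ = ∑ j ∈ Finset.range (m + 1),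
          (j * stirling2 m j * k.descFactorial j + stirling2 m j * k.descFactorial (j + 1)) := by
        exact Finset.sum_congr rfl fun j _ => by rw [key j]; ring
    _ = (∑ j ∈ Finset.range (m + 1), j * stirling2 m j * k.descFactorial j)
          + ∑ j ∈ Finset.range (m + 1), stirling2 m j * k.descFactorial (j + 1) := by
        rw [Finset.sum_add_distrib]
    _ = (∑ j ∈ Finset.range (m + 2), j * stirling2 m j * k.descFactorial j)
          + ∑ j ∈ Finset.range (m + 1), stirling2 m j * k.descFactorial (j + 1) := by
        rw [Finset.sum_range_succ (fun j => j * stirling2 m j * k.descFactorial j) (m+1),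
            stirling2_eq_zero_of_lt m (m+1) (by omega)]
        ring
    _ = ∑ j ∈ Finset.range (m + 2), stirling2 (m + 1) j * k.descFactorial j := by
        rw [Finset.sum_range_succ' (fun j => j * stirling2 m j * k.descFactorial j) (m+1),
            Finset.sum_range_succ' (fun j => stirling2 (m+1) j * k.descFactorial j) (m+1)]
        simp only [Nat.mul_zero, Nat.zero_mul, Nat.add_zero]
        rw [← Finset.sum_add_distrib]
        have h0 : stirling2 (m+1) 0 * k.descFactorial 0 = 0 := by rfl
        rw [h0]
        refine (Finset.sum_congr rfl fun j _ => ?_).symm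
        show ((j + 1) * stirling2 m (j + 1) + stirling2 m j) * k.descFactorial (j + 1) = _
        ring

lemma one_sub_pow {R : Type*} [CommRing R] (N : ℕ) (x : R) :
    (1 - x) ^ N = ∑ i ∈ Finset.range (N + 1),
      (Nat.choose N i : R) * (-1 : R) ^ (N - i) * x ^ (N - i) := by
  have : (1 - x) ^ N = (1 + -x) ^ N := by ring_nf
  rw [this, add_pow]
  refine Finset.sum_congr rfl fun i _ => ?_
  rw [neg_pow]
  ring

lemma stmt15_inner {R : Type*} [CommRing R] (n j : ℕ) (x : R) :
    ∑ k ∈ Finset.range (n + 1),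
        ((Nat.choose n k * Nat.descFactorial k j : ℕ) : R) * (-1 : R) ^ (n - k) * x ^ (n - k)
      = ((Nat.choose n j * Nat.factorial j : ℕ) : R) * (1 - x) ^ (n - j) := by
  rcases le_or_gt j n with hjn | hjn
  · have hsub : Finset.Ico j (n + 1) ⊆ Finset.range (n + 1) := by
      intro a ha; simp only [Finset.mem_Ico, Finset.mem_range] at *; omega
    rw [← Finset.sum_subset hsub (by
      intro a ha hna
      simp only [Finset.mem_Ico, Finset.mem_range] at *
      have : a < j := by omega
      rw [Nat.descFactorial_eq_zero_iff_lt.2 this]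
      push_cast
      ring)]
    rw [Finset.sum_Ico_eq_sum_range]
    have hlen : n + 1 - j = (n - j) + 1 := by omega
    rw [hlen, one_sub_pow (n - j) x, Finset.mul_sum]
    refine Finset.sum_congr rfl fun i hi => ?_
    simp only [Finset.mem_range] at hi
    have hi' : i ≤ n - j := by omega
    have h1 : Nat.choose n (j + i) * Nat.descFactorial (j + i) j
        = Nat.choose n j * Nat.factorial j * Nat.choose (n - j) i := by
      rw [Nat.descFactorial_eq_factorial_mul_choose, ← Nat.mul_assoc,
          Nat.mul_comm (Nat.choose n (j+i)) (Nat.factorial j), Nat.mul_assoc,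
          Nat.choose_mul (by omega), Nat.add_sub_cancel_left]
      ring
    have h2 : n - (j + i) = (n - j) - i := by omega
    rw [h1, h2]
    push_cast
    ring
  · have hz : ∀ k ∈ Finset.range (n + 1),
        ((Nat.choose n k * Nat.descFactorial k j : ℕ) : R) * (-1 : R) ^ (n - k) * x ^ (n - k) = 0 := by
      intro k hk
      simp only [Finset.mem_range] at hk
      rw [Nat.descFactorial_eq_zero_iff_lt.2 (by omega)]
      push_cast; ring
    rw [Finset.sum_eq_zero hz, Nat.choose_eq_zero_of_lt hjn]
    push_cast; ring

/-- An umbral identity: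
`Σ_{k=0}^n C(n,k) k^m (−1)^{n−k} x^{n−k} = Σ_{k=0}^{m∧n} S(m,k) C(n,k) k! (1−x)^{n−k}`. -/
theorem stmt15 {R : Type*} [CommRing R] (m n : ℕ) (x : R) :
    ∑ k ∈ Finset.range (n + 1),
        (Nat.choose n k * k ^ m : ℕ) * (-1 : R) ^ (n - k) * x ^ (n - k)
      = ∑ k ∈ Finset.range (min m n + 1),
          (stirling2 m k * Nat.choose n k * Nat.factorial k : ℕ) * (1 - x) ^ (n - k) := by
  have step1 : ∑ k ∈ Finset.range (n + 1),
        (Nat.choose n k * k ^ m : ℕ) * (-1 : R) ^ (n - k) * x ^ (n - k)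
      = ∑ j ∈ Finset.range (m + 1), ∑ k ∈ Finset.range (n + 1),
          (stirling2 m j : R) * (((Nat.choose n k * Nat.descFactorial k j : ℕ) : R)
            * (-1 : R) ^ (n - k) * x ^ (n - k)) := by
    rw [Finset.sum_comm]
    refine Finset.sum_congr rfl fun k _ => ?_
    rw [pow_eq_sum_stirling2 m k]
    push_cast
    rw [Finset.mul_sum, Finset.sum_mul, Finset.sum_mul]
    refine Finset.sum_congr rfl fun j _ => ?_
    ring
  rw [step1]
  have step2 : ∀ j ∈ Finset.range (m + 1),
      ∑ k ∈ Finset.range (n + 1),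
          (stirling2 m j : R) * (((Nat.choose n k * Nat.descFactorial k j : ℕ) : R)
            * (-1 : R) ^ (n - k) * x ^ (n - k))
        = (stirling2 m j * Nat.choose n j * Nat.factorial j : ℕ) * (1 - x) ^ (n - j) := by
    intro j _
    rw [← Finset.mul_sum, stmt15_inner n j x]
    push_cast
    ring
  rw [Finset.sum_congr rfl step2]
  symm
  apply Finset.sum_subset
  · intro a ha; simp only [Finset.mem_range] at *; omega
  · intro j hj hnj
    simp only [Finset.mem_range] at *
    have : n < j := by omega
    rw [Nat.choose_eq_zero_of_lt this]
    push_cast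
    ring
end

section
/- Let K be a field of characteristic 0, let g, f ∈ K[[t]] with g(0) ≠ 0, f(0) = 0 and [t]f ≠ 0, and define r_{n,k} = [t^n] g f^k and r♯_{n,k} = [t^n] g (f+1)^k for all n, k ≥ 0. Then for every m, n, s ∈ ℕ: Σ_{k=0}^{n} C(n,k)·r_{s,n−k}·k^m = Σ_{k=0}^{min(m,n)} S(m,k)·C(n,k)·k!·r♯_{s,n−k}. -/
open PowerSeries

lemma stirling2_eq_zero : ∀ m k, m < k → stirling2 m k = 0
  | 0, _ + 1, _ => rfl
  | m + 1, k + 1, h => by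
      rw [stirling2, stirling2_eq_zero m (k+1) (by omega), stirling2_eq_zero m k (by omega)]
      simp

lemma desc_key (k j : ℕ) : k * k.descFactorial j
    = k.descFactorial (j+1) + j * k.descFactorial j := by
  rcases le_or_gt j k with h | h
  · rw [Nat.descFactorial_succ]
    have : k = (k - j) + j := by omega
    nlinarith [this]
  · rw [Nat.descFactorial_of_lt h, Nat.descFactorial_of_lt (by omega)]; simp

lemma pow_eq_sum (k : ℕ) : ∀ m, k ^ m
    = ∑ j ∈ Finset.range (m + 1), stirling2 m j * k.descFactorial j
  | 0 => by simp [stirling2]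
  | m + 1 => by
    have key : ∑ j ∈ Finset.range (m+1), j * stirling2 m j * k.descFactorial j
        = ∑ j ∈ Finset.range (m+1),
            (j+1) * stirling2 m (j+1) * k.descFactorial (j+1) := by
      rw [Finset.sum_range_succ' (fun j => j * stirling2 m j * k.descFactorial j),
        Finset.sum_range_succ, stirling2_eq_zero m (m+1) (by omega)]
      simp
    rw [pow_succ, pow_eq_sum k m, Finset.sum_mul]
    rw [Finset.sum_range_succ' (fun j => stirling2 (m+1) j * k.descFactorial j)]
    simp only [stirling2, Nat.descFactorial_zero, mul_zero, zero_mul, mul_one, add_zero]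
    calc ∑ j ∈ Finset.range (m+1), stirling2 m j * k.descFactorial j * k
        = ∑ j ∈ Finset.range (m+1), (stirling2 m j * k.descFactorial (j+1)
            + j * stirling2 m j * k.descFactorial j) := by
          refine Finset.sum_congr rfl fun j _ => ?_
          rw [mul_assoc, mul_comm (Nat.descFactorial k j) k, desc_key]; ring
      _ = ∑ j ∈ Finset.range (m+1), (stirling2 m j * k.descFactorial (j+1))
            + ∑ j ∈ Finset.range (m+1), (j+1) * stirling2 m (j+1) * k.descFactorial (j+1) := by
          rw [Finset.sum_add_distrib, key]
      _ = _ := by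
          rw [← Finset.sum_add_distrib]
          refine Finset.sum_congr rfl fun j _ => ?_
          ring

lemma coeff_mul_addpow {K : Type*} [Field K] (g f : K⟦X⟧) (s N : ℕ) :
    coeff s (g * (f + 1) ^ N)
      = ∑ i ∈ Finset.range (N + 1), (N.choose i : K) * coeff s (g * f ^ i) := by
  rw [add_pow, Finset.mul_sum, map_sum]
  refine Finset.sum_congr rfl fun i _ => ?_
  rw [one_pow, mul_one, ← mul_assoc, ← map_natCast (C (R := K)) (N.choose i), coeff_mul_C, mul_comm]

/-- Umbral identity relating a Riordan matrix `(g, f)` and the associated Riordan type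
matrix `(g, f + 1)`. -/
theorem stmt16 {K : Type*} [Field K] [CharZero K]
    (g f : K⟦X⟧) (hg0 : constantCoeff g ≠ 0)
    (hf0 : constantCoeff f = 0) (hf1 : coeff 1 f ≠ 0)
    (r rs : ℕ → ℕ → K)
    (hr : ∀ n k, r n k = coeff n (g * f ^ k))
    (hrs : ∀ n k, rs n k = coeff n (g * (f + 1) ^ k)) :
    ∀ m n s : ℕ,
      ∑ k ∈ Finset.range (n + 1), (Nat.choose n k : K) * r s (n - k) * (k ^ m : ℕ)
        = ∑ k ∈ Finset.range (min m n + 1),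
            (stirling2 m k * Nat.choose n k * Nat.factorial k : ℕ) * rs s (n - k) := by
  intro m n s
  have expand : ∀ N, rs s N = ∑ i ∈ Finset.range (N+1), (N.choose i : K) * r s (N - i) := by
    intro N
    rw [hrs, coeff_mul_addpow, ← Finset.sum_range_reflect]
    refine Finset.sum_congr rfl fun i hi => ?_
    rw [Finset.mem_range] at hi
    have h1 : N + 1 - 1 - i = N - i := by omega
    rw [h1, Nat.choose_symm (by omega), hr]
  -- extend RHS sum to range (m+1)
  have hR : ∑ k ∈ Finset.range (min m n + 1),
        ((stirling2 m k * Nat.choose n k * Nat.factorial k : ℕ) : K) * rs s (n-k)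
      = ∑ k ∈ Finset.range (m + 1),
        ((stirling2 m k * Nat.choose n k * Nat.factorial k : ℕ) : K) * rs s (n-k) := by
    apply Finset.sum_subset (Finset.range_subset_range.2 (by omega))
    intro k hk hk2
    simp only [Finset.mem_range] at hk hk2
    have : n.choose k = 0 := Nat.choose_eq_zero_of_lt (by omega)
    simp [this]
  rw [hR]
  -- expand k^m on LHS
  have hL : ∀ k : ℕ, ((k ^ m : ℕ) : K)
      = ∑ j ∈ Finset.range (m+1), ((stirling2 m j * Nat.descFactorial k j : ℕ) : K) := by
    intro k
    exact_mod_cast congrArg (Nat.cast (R := K)) (pow_eq_sum k m)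
  calc ∑ k ∈ Finset.range (n + 1), (Nat.choose n k : K) * r s (n - k) * ((k ^ m : ℕ) : K)
      = ∑ k ∈ Finset.range (n + 1), ∑ j ∈ Finset.range (m+1),
          (Nat.choose n k : K) * r s (n - k)
            * ((stirling2 m j * Nat.descFactorial k j : ℕ) : K) := by
        refine Finset.sum_congr rfl fun k _ => ?_
        rw [hL, Finset.mul_sum]
    _ = ∑ j ∈ Finset.range (m+1), ∑ k ∈ Finset.range (n + 1),
          (Nat.choose n k : K) * r s (n - k)
            * ((stirling2 m j * Nat.descFactorial k j : ℕ) : K) := Finset.sum_comm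
    _ = ∑ j ∈ Finset.range (m + 1),
          ((stirling2 m j * Nat.choose n j * Nat.factorial j : ℕ) : K) * rs s (n-j) := by
        refine Finset.sum_congr rfl fun j _ => ?_
        rcases le_or_gt j n with hjn | hjn
        · -- split the sum at j
          rw [Finset.range_eq_Ico,
            ← Finset.sum_Ico_consecutive _ (Nat.zero_le j) (by omega : j ≤ n + 1)]
          have h0 : ∑ k ∈ Finset.Ico 0 j, (Nat.choose n k : K) * r s (n - k)
              * ((stirling2 m j * Nat.descFactorial k j : ℕ) : K) = 0 := by
            apply Finset.sum_eq_zero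
            intro k hk
            rw [Finset.mem_Ico] at hk
            rw [Nat.descFactorial_of_lt hk.2]
            simp
          rw [h0, zero_add, Finset.sum_Ico_eq_sum_range]
          have hrange : n + 1 - j = (n - j) + 1 := by omega
          rw [hrange, expand (n - j), Finset.mul_sum]
          refine Finset.sum_congr rfl fun i hi => ?_
          rw [Finset.mem_range] at hi
          have hnat : n.choose (j+i) * (stirling2 m j * Nat.descFactorial (j+i) j)
              = stirling2 m j * n.choose j * j.factorial * (n-j).choose i := by
            have hc := Nat.choose_mul (n := n) (show j ≤ j + i by omega)
            rw [Nat.add_sub_cancel_left] at hc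
            rw [Nat.descFactorial_eq_factorial_mul_choose]
            calc n.choose (j+i) * (stirling2 m j * (j.factorial * (j+i).choose j))
                = stirling2 m j * j.factorial * (n.choose (j+i) * (j+i).choose j) := by ring
              _ = stirling2 m j * j.factorial * (n.choose j * (n-j).choose i) := by rw [hc]
              _ = stirling2 m j * n.choose j * j.factorial * (n-j).choose i := by ring
          have hsub : n - (j + i) = n - j - i := by omega
          have hK := congrArg (fun x : ℕ => (x : K) * r s (n - j - i)) hnat
          push_cast at hK
          rw [hsub]
          push_cast
          linear_combination hK
        · -- j > n : both sides vanish
          have h0 : ∑ k ∈ Finset.range (n + 1), (Nat.choose n k : K) * r s (n - k)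
              * ((stirling2 m j * Nat.descFactorial k j : ℕ) : K) = 0 := by
            apply Finset.sum_eq_zero
            intro k hk
            rw [Finset.mem_range] at hk
            rw [Nat.descFactorial_of_lt (by omega)]
            simp
          have : n.choose j = 0 := Nat.choose_eq_zero_of_lt hjn
          rw [h0, this]
          simp
end
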